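/- If P and Q are hyperbolic-valued probability distributions with s(P) = s(Q) and P hyperbolically majorizes Q, then H_𝔻(P) ⪯ H_𝔻(Q) and G_𝔻(P) ⪯ G_𝔻(Q) in the hyperbolic partial order, where H_𝔻 applies Shannon entropy and G_𝔻 applies the Gini–Simpson entropy 1 − ∑ p_j² to each active idempotent component. -/

import Mathlib

noncomputable abbrev HypD : Type := ℝ × ℝ

noncomputable def topSum {n : ℕ} (x : Fin n → ℝ) (k : ℕ) : ℝ :=
  sSup ((fun A : Finset (Fin n) => ∑ i ∈ A, x i) '' {A | A.card = k})

def Majorizes {n : ℕ} (x y : Fin n → ℝ) : Prop :=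
  (∀ k : ℕ, topSum y k ≤ topSum x k) ∧ ∑ i, x i = ∑ i, y i

open Real MeasureTheory Finset intervalIntegral Set

lemma topSum_lower {n : ℕ} (x : Fin n → ℝ) (A : Finset (Fin n)) :
    ∑ i ∈ A, x i ≤ topSum x A.card := by
  apply le_csSup
  · exact (Set.Finite.image _ (Set.toFinite _)).bddAbove
  · exact ⟨A, rfl, rfl⟩

lemma topSum_upper {n : ℕ} (x : Fin n → ℝ) (c : ℝ) (k : ℕ) (hk : k ≤ n) :
    topSum x k ≤ (∑ i, max (x i - c) 0) + k * c := by
  obtain ⟨B, -, hB⟩ := Finset.exists_subset_card_eq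
    (s := (Finset.univ : Finset (Fin n))) (n := k) (by simpa using hk)
  refine csSup_le ⟨∑ i ∈ B, x i, ⟨B, hB, rfl⟩⟩ ?_
  rintro _ ⟨A, hA, rfl⟩
  rw [Set.mem_setOf_eq] at hA
  show ∑ i ∈ A, x i ≤ _
  have h1 : ∑ i ∈ A, x i = (∑ i ∈ A, (x i - c)) + A.card * c := by
    rw [Finset.sum_sub_distrib, Finset.sum_const, nsmul_eq_mul]; ring
  have h2 : ∑ i ∈ A, (x i - c) ≤ ∑ i ∈ A, max (x i - c) 0 :=
    Finset.sum_le_sum fun i _ => le_max_left _ _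
  have h3 : ∑ i ∈ A, max (x i - c) 0 ≤ ∑ i, max (x i - c) 0 :=
    Finset.sum_le_sum_of_subset_of_nonneg (Finset.subset_univ A)
      (fun i _ _ => le_max_right _ _)
  have hA' : (A.card : ℝ) = k := by rw [hA]
  rw [h1, hA']
  linarith

lemma hockey_mono {n : ℕ} {x y : Fin n → ℝ}
    (h : ∀ k, topSum y k ≤ topSum x k) (c : ℝ) :
    ∑ i, max (y i - c) 0 ≤ ∑ i, max (x i - c) 0 := by
  set A := Finset.univ.filter (fun i => c ≤ y i) with hA
  have h1 : ∑ i, max (y i - c) 0 = ∑ i ∈ A, (y i - c) := by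
    rw [← Finset.sum_filter_add_sum_filter_not Finset.univ (fun i => c ≤ y i)
      (fun i => max (y i - c) 0)]
    have e1 : ∑ i ∈ A, max (y i - c) 0 = ∑ i ∈ A, (y i - c) :=
      Finset.sum_congr rfl fun i hi => max_eq_left (sub_nonneg.2 (Finset.mem_filter.1 hi).2)
    have e2 : ∑ i ∈ Finset.univ.filter (fun i => ¬ c ≤ y i), max (y i - c) 0 = 0 :=
      Finset.sum_eq_zero fun i hi => by
        have hlt := (Finset.mem_filter.1 hi).2
        push_neg at hlt
        exact max_eq_right (by linarith)
    rw [e1, e2, add_zero]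
  have h2 : ∑ i ∈ A, (y i - c) = (∑ i ∈ A, y i) - A.card * c := by
    rw [Finset.sum_sub_distrib, Finset.sum_const, nsmul_eq_mul]
  have h3 : ∑ i ∈ A, y i ≤ topSum y A.card := topSum_lower y A
  have h4 : topSum y A.card ≤ topSum x A.card := h _
  have h5 : topSum x A.card ≤ (∑ i, max (x i - c) 0) + A.card * c :=
    topSum_upper x c A.card (le_trans (Finset.card_filter_le _ _) (by simp))
  linarith

lemma sq_eq_integral (t : ℝ) (ht0 : 0 ≤ t) (ht1 : t ≤ 1) :
    t ^ 2 = ∫ s in (0:ℝ)..1, 2 * max (t - s) 0 := by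
  have hc : Continuous fun s : ℝ => 2 * max (t - s) 0 :=
    continuous_const.mul ((continuous_const.sub continuous_id).max continuous_const)
  rw [← intervalIntegral.integral_add_adjacent_intervals (b := t)
    (hc.intervalIntegrable 0 t) (hc.intervalIntegrable t 1)]
  have e1 : ∫ s in (0:ℝ)..t, 2 * max (t - s) 0 = ∫ s in (0:ℝ)..t, (2 * t - 2 * s) := by
    apply intervalIntegral.integral_congr
    intro s hs
    rw [Set.uIcc_of_le ht0] at hs
    show 2 * max (t - s) 0 = 2 * t - 2 * s
    rw [max_eq_left (by linarith [hs.2])]; ring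
  have e2 : ∫ s in t..(1:ℝ), 2 * max (t - s) 0 = 0 := by
    rw [intervalIntegral.integral_congr (g := fun _ => (0:ℝ)) ?_, intervalIntegral.integral_zero]
    intro s hs
    rw [Set.uIcc_of_le ht1] at hs
    show 2 * max (t - s) 0 = 0
    rw [max_eq_right (by linarith [hs.1])]; ring
  rw [e1, e2, add_zero,
    intervalIntegral.integral_sub (f := fun _ => 2 * t) (g := fun s => 2 * s) (continuous_const.intervalIntegrable _ _)
      ((continuous_const.mul continuous_id').intervalIntegrable _ _),
    intervalIntegral.integral_const, intervalIntegral.integral_const_mul, integral_id]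
  simp [smul_eq_mul]
  ring

lemma phi_intable (t : ℝ) (ht0 : 0 ≤ t) (a b : ℝ) (hab : Set.uIoc a b ⊆ Set.Ioc 0 1) :
    IntervalIntegrable (fun s => (max (t - s) 0 - t) / s) volume a b := by
  rw [intervalIntegrable_iff]
  have hfin : IsFiniteMeasure (volume.restrict (Set.Ioc (0:ℝ) 1)) := by
    constructor
    rw [Measure.restrict_apply_univ]
    simp
  have hbig : IntegrableOn (fun s => (max (t - s) 0 - t) / s) (Set.Ioc (0:ℝ) 1) volume := by
    have hmeas : AEStronglyMeasurable (fun s => (max (t - s) 0 - t) / s)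
        (volume.restrict (Set.Ioc (0:ℝ) 1)) :=
      ((((continuous_const.sub continuous_id).max continuous_const).sub
        continuous_const).measurable.div measurable_id).aestronglyMeasurable
    apply MeasureTheory.Integrable.mono' (g := fun _ => (1:ℝ)) (integrable_const 1) hmeas
    rw [ae_restrict_iff' measurableSet_Ioc]
    refine Filter.Eventually.of_forall fun s hs => ?_
    obtain ⟨hs0, hs1⟩ := hs
    rw [Real.norm_eq_abs, abs_div, abs_of_pos hs0, div_le_one hs0]
    rcases le_or_gt s t with h | h
    · rw [max_eq_left (by linarith), abs_of_nonpos (by linarith)]; linarith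
    · rw [max_eq_right (by linarith), abs_of_nonpos (by linarith)]; linarith
  exact hbig.mono_set hab

lemma mulLog_eq (t : ℝ) (ht0 : 0 ≤ t) (ht1 : t ≤ 1) :
    t * Real.log t = t + ∫ s in (0:ℝ)..1, (max (t - s) 0 - t) / s := by
  rcases eq_or_lt_of_le ht0 with h0 | h0
  · subst h0
    rw [intervalIntegral.integral_congr (g := fun _ => (0:ℝ)) ?_]
    · simp
    · intro s hs
      rw [Set.uIcc_of_le (by norm_num : (0:ℝ) ≤ 1)] at hs
      show (max (0 - s) 0 - 0) / s = 0
      rw [zero_sub, max_eq_right (by linarith [hs.1]), sub_zero, zero_div]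
  · rw [← intervalIntegral.integral_add_adjacent_intervals (b := t)
      (phi_intable t ht0 0 t (by rw [Set.uIoc_of_le ht0]; exact Set.Ioc_subset_Ioc le_rfl ht1))
      (phi_intable t ht0 t 1 (by rw [Set.uIoc_of_le ht1]; exact Set.Ioc_subset_Ioc ht0 le_rfl))]
    have e1 : ∫ s in (0:ℝ)..t, (max (t - s) 0 - t) / s = ∫ s in (0:ℝ)..t, (-1 : ℝ) := by
      apply intervalIntegral.integral_congr_ae
      refine Filter.Eventually.of_forall fun s hs => ?_
      rw [Set.uIoc_of_le ht0] at hs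
      show (max (t - s) 0 - t) / s = -1
      rw [max_eq_left (by linarith [hs.2]),
        show t - s - t = -s by ring, neg_div, div_self (ne_of_gt hs.1)]
    have e2 : ∫ s in t..(1:ℝ), (max (t - s) 0 - t) / s = ∫ s in t..(1:ℝ), (-(t * s⁻¹)) := by
      apply intervalIntegral.integral_congr
      intro s hs
      rw [Set.uIcc_of_le ht1] at hs
      have hs0 : (0:ℝ) < s := lt_of_lt_of_le h0 hs.1
      show (max (t - s) 0 - t) / s = -(t * s⁻¹)
      rw [max_eq_right (by linarith [hs.1]), zero_sub, neg_div, div_eq_mul_inv]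
    rw [e1, e2, intervalIntegral.integral_const, intervalIntegral.integral_neg,
      intervalIntegral.integral_const_mul, integral_inv
        (by rw [Set.uIcc_of_le ht1]; rintro ⟨h1, -⟩; linarith)]
    rw [Real.log_div one_ne_zero (ne_of_gt h0), Real.log_one]
    simp only [smul_eq_mul]
    ring

lemma intable_sum {n : ℕ} {a b : ℝ} (f : Fin n → ℝ → ℝ)
    (h : ∀ i, IntervalIntegrable (f i) volume a b) :
    IntervalIntegrable (fun s => ∑ i, f i s) volume a b := by
  have hthis := IntervalIntegrable.sum Finset.univ (f := f) (μ := volume) (a := a) (b := b)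
    (fun i _ => h i)
  have hfe : (fun s => ∑ i, f i s) = ∑ i, f i := by ext s; simp
  rw [hfe]
  exact hthis

lemma sum_mulLog_le {n : ℕ} {x y : Fin n → ℝ}
    (hx0 : ∀ i, 0 ≤ x i) (hx1 : ∀ i, x i ≤ 1)
    (hy0 : ∀ i, 0 ≤ y i) (hy1 : ∀ i, y i ≤ 1)
    (hsum : ∑ i, x i = ∑ i, y i)
    (h : ∀ c, ∑ i, max (y i - c) 0 ≤ ∑ i, max (x i - c) 0) :
    ∑ i, y i * Real.log (y i) ≤ ∑ i, x i * Real.log (x i) := by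
  have hphi : ∀ (z : Fin n → ℝ), (∀ i, 0 ≤ z i) → ∀ i : Fin n,
      IntervalIntegrable (fun s => (max (z i - s) 0 - z i) / s) volume 0 1 := fun z hz0 i =>
    phi_intable (z i) (hz0 i) 0 1 (by rw [Set.uIoc_of_le (by norm_num)])
  have key : ∀ (z : Fin n → ℝ), (∀ i, 0 ≤ z i) → (∀ i, z i ≤ 1) →
      ∑ i, z i * Real.log (z i)
        = (∑ i, z i) + ∫ s in (0:ℝ)..1, ∑ i, (max (z i - s) 0 - z i) / s := by
    intro z hz0 hz1
    rw [intervalIntegral.integral_finset_sum (fun i _ => hphi z hz0 i), ← Finset.sum_add_distrib]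
    exact Finset.sum_congr rfl fun i _ => mulLog_eq (z i) (hz0 i) (hz1 i)
  rw [key x hx0 hx1, key y hy0 hy1, hsum]
  apply add_le_add_right
  apply intervalIntegral.integral_mono_on (by norm_num)
    (intable_sum _ (hphi y hy0)) (intable_sum _ (hphi x hx0))
  intro s hs
  rcases eq_or_lt_of_le hs.1 with h0 | h0
  · subst h0
    simp [div_zero]
  · rw [← Finset.sum_div, ← Finset.sum_div, Finset.sum_sub_distrib, Finset.sum_sub_distrib, hsum]
    exact div_le_div_of_nonneg_right (by linarith [h s]) h0.le

lemma sum_sq_le {n : ℕ} {x y : Fin n → ℝ}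
    (hx0 : ∀ i, 0 ≤ x i) (hx1 : ∀ i, x i ≤ 1)
    (hy0 : ∀ i, 0 ≤ y i) (hy1 : ∀ i, y i ≤ 1)
    (h : ∀ c, ∑ i, max (y i - c) 0 ≤ ∑ i, max (x i - c) 0) :
    ∑ i, (y i) ^ 2 ≤ ∑ i, (x i) ^ 2 := by
  have hcont : ∀ t : ℝ, Continuous fun s : ℝ => 2 * max (t - s) 0 := fun t =>
    continuous_const.mul ((continuous_const.sub continuous_id).max continuous_const)
  have key : ∀ (z : Fin n → ℝ), (∀ i, 0 ≤ z i) → (∀ i, z i ≤ 1) →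
      ∑ i, (z i) ^ 2 = ∫ s in (0:ℝ)..1, ∑ i, 2 * max (z i - s) 0 := by
    intro z hz0 hz1
    rw [intervalIntegral.integral_finset_sum
      (fun i _ => (hcont (z i)).intervalIntegrable 0 1)]
    exact Finset.sum_congr rfl fun i _ => sq_eq_integral (z i) (hz0 i) (hz1 i)
  rw [key x hx0 hx1, key y hy0 hy1]
  apply intervalIntegral.integral_mono_on (by norm_num)
    (intable_sum _ fun i => (hcont (y i)).intervalIntegrable 0 1)
    (intable_sum _ fun i => (hcont (x i)).intervalIntegrable 0 1)
  intro s _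
  rw [← Finset.mul_sum, ← Finset.mul_sum]
  exact mul_le_mul_of_nonneg_left (h s) (by norm_num)

theorem stmt_9 (n : ℕ) (hn : 2 ≤ n) (P Q : Fin n → HypD) (s1 s2 : ℝ)
    (hs1 : s1 = 0 ∨ s1 = 1) (hs2 : s2 = 0 ∨ s2 = 1) (hact : s1 = 1 ∨ s2 = 1)
    (hPpos : ∀ j, 0 ≤ (P j).1 ∧ 0 ≤ (P j).2)
    (hPsum1 : ∑ j, (P j).1 = s1) (hPsum2 : ∑ j, (P j).2 = s2)
    (hQpos : ∀ j, 0 ≤ (Q j).1 ∧ 0 ≤ (Q j).2)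
    (hQsum1 : ∑ j, (Q j).1 = s1) (hQsum2 : ∑ j, (Q j).2 = s2)
    (hmaj1 : Majorizes (fun j => (P j).1) (fun j => (Q j).1))
    (hmaj2 : Majorizes (fun j => (P j).2) (fun j => (Q j).2)) :
    (∑ j, Real.negMulLog (P j).1 ≤ ∑ j, Real.negMulLog (Q j).1 ∧
      ∑ j, Real.negMulLog (P j).2 ≤ ∑ j, Real.negMulLog (Q j).2) ∧
    ((s1 - ∑ j, (P j).1 ^ 2) ≤ (s1 - ∑ j, (Q j).1 ^ 2) ∧
      (s2 - ∑ j, (P j).2 ^ 2) ≤ (s2 - ∑ j, (Q j).2 ^ 2)) := by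
  have hs1' : s1 ≤ 1 := by rcases hs1 with h | h <;> simp [h]
  have hs2' : s2 ≤ 1 := by rcases hs2 with h | h <;> simp [h]
  have hP1le : ∀ j, (P j).1 ≤ 1 := fun j => le_trans
    (hPsum1 ▸ Finset.single_le_sum (f := fun j => (P j).1)
      (fun i _ => (hPpos i).1) (Finset.mem_univ j)) hs1'
  have hP2le : ∀ j, (P j).2 ≤ 1 := fun j => le_trans
    (hPsum2 ▸ Finset.single_le_sum (f := fun j => (P j).2)
      (fun i _ => (hPpos i).2) (Finset.mem_univ j)) hs2'
  have hQ1le : ∀ j, (Q j).1 ≤ 1 := fun j => le_trans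
    (hQsum1 ▸ Finset.single_le_sum (f := fun j => (Q j).1)
      (fun i _ => (hQpos i).1) (Finset.mem_univ j)) hs1'
  have hQ2le : ∀ j, (Q j).2 ≤ 1 := fun j => le_trans
    (hQsum2 ▸ Finset.single_le_sum (f := fun j => (Q j).2)
      (fun i _ => (hQpos i).2) (Finset.mem_univ j)) hs2'
  have hh1 := hockey_mono hmaj1.1
  have hh2 := hockey_mono hmaj2.1
  have hsum1 : ∑ j, (P j).1 = ∑ j, (Q j).1 := by rw [hPsum1, hQsum1]
  have hsum2 : ∑ j, (P j).2 = ∑ j, (Q j).2 := by rw [hPsum2, hQsum2]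
  have e1 := sum_mulLog_le (x := fun j => (P j).1) (y := fun j => (Q j).1)
    (fun j => (hPpos j).1) hP1le (fun j => (hQpos j).1) hQ1le hsum1 hh1
  have e2 := sum_mulLog_le (x := fun j => (P j).2) (y := fun j => (Q j).2)
    (fun j => (hPpos j).2) hP2le (fun j => (hQpos j).2) hQ2le hsum2 hh2
  have g1 := sum_sq_le (x := fun j => (P j).1) (y := fun j => (Q j).1)
    (fun j => (hPpos j).1) hP1le (fun j => (hQpos j).1) hQ1le hh1
  have g2 := sum_sq_le (x := fun j => (P j).2) (y := fun j => (Q j).2)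
    (fun j => (hPpos j).2) hP2le (fun j => (hQpos j).2) hQ2le hh2
  refine ⟨⟨?_, ?_⟩, sub_le_sub_left g1 s1, sub_le_sub_left g2 s2⟩
  · simpa [Real.negMulLog, Finset.sum_neg_distrib] using neg_le_neg e1
  · simpa [Real.negMulLog, Finset.sum_neg_distrib] using neg_le_neg e2
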